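/- Let α ∈ (0,1), B > 0, and let p be a probability density on (0,∞) with p(y) = y^{-1-α} for all y ≥ B. Let h > 0, L > 0, β > α, and let f : [0,∞) → ℝ be continuous with f(0) = 0, f(y) → 0 as y → ∞, and |f(y)| ≤ L·y^β for all y ∈ [0, B·h]. Then |h^{-α} ∫₀^∞ f(h·y) p(y) dy − ∫₀^∞ f(y) y^{-1-α} dy| ≤ (B^{β-α}/(β-α) + ∫₀^B y^β p(y) dy) · L · h^{β-α}. -/

import Mathlib

open MeasureTheory Set Filter

/-- Remark after Proposition 5.1 (Hölder case): if `p` is a probability density on `(0,∞)`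
with `p(y) = y^{-1-α}` for `y ≥ B`, and `f` is continuous on `[0,∞)` with `f(0)=0`, `f(∞)=0`
and `|f(y)| ≤ L y^β` on `[0,Bh]` with `β > α`, then
`|h^{-α} ∫₀^∞ f(hy) p(y) dy − ∫₀^∞ f(y) y^{-1-α} dy|
  ≤ (B^{β-α}/(β-α) + ∫₀^B y^β p(y) dy) L h^{β-α}`. -/
theorem stmt_1
    (α B h L β : ℝ) (hα : α ∈ Set.Ioo (0:ℝ) 1) (hB : 0 < B) (hh : 0 < h) (hL : 0 < L)
    (hβ : α < β)
    (p : ℝ → ℝ) (hp_meas : Measurable p)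
    (hp_nonneg : ∀ y ∈ Set.Ioi (0:ℝ), 0 ≤ p y)
    (hp_prob : ∫ y in Set.Ioi (0:ℝ), p y = 1)
    (hp_tail : ∀ y : ℝ, B ≤ y → p y = y ^ (-1 - α))
    (f : ℝ → ℝ) (hf_cont : ContinuousOn f (Set.Ici 0))
    (hf0 : f 0 = 0)
    (hf_inf : Tendsto f atTop (nhds 0))
    (hf_hold : ∀ y ∈ Set.Icc (0:ℝ) (B * h), |f y| ≤ L * y ^ β) :
    |h ^ (-α) * (∫ y in Set.Ioi (0:ℝ), f (h * y) * p y)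
        - ∫ y in Set.Ioi (0:ℝ), f y * y ^ (-1 - α)|
      ≤ (B ^ (β - α) / (β - α) + ∫ y in Set.Ioc (0:ℝ) B, y ^ β * p y) * L * h ^ (β - α) := by
  obtain ⟨hα0, hα1⟩ := hα
  have hBh : 0 < B * h := mul_pos hB hh
  -- f is bounded on [0, ∞)
  obtain ⟨C, hC⟩ : ∃ C, ∀ y, C ≤ y → |f y| ≤ 1 := by
    have := (hf_inf.abs.eventually (eventually_le_nhds (show |(0:ℝ)| < 1 by norm_num)))
    simpa [abs_zero] using eventually_atTop.1 this
  obtain ⟨M₀, hM₀⟩ := (isCompact_Icc (a := (0:ℝ)) (b := max C 0)).exists_bound_of_continuousOn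
    (hf_cont.mono (Icc_subset_Ici_self))
  set M : ℝ := max M₀ 1 with hMdef
  have hM : ∀ y : ℝ, 0 ≤ y → |f y| ≤ M := by
    intro y hy
    rcases le_total y (max C 0) with hyc | hyc
    · exact le_trans (by simpa using hM₀ y ⟨hy, hyc⟩) (le_max_left _ _)
    · exact le_trans (hC y (le_trans (le_max_left _ _) hyc)) (le_max_right _ _)
  have hM0 : 0 ≤ M := le_trans zero_le_one (le_max_right _ _)
  -- p is integrable on (0, ∞)
  have hp_int : IntegrableOn p (Ioi (0:ℝ)) := by
    by_contra hcon
    rw [MeasureTheory.integral_undef hcon] at hp_prob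
    norm_num at hp_prob
  have hp_ae : 0 ≤ᵐ[volume.restrict (Ioi (0:ℝ))] p :=
    (ae_restrict_iff' measurableSet_Ioi).2 (ae_of_all _ hp_nonneg)
  -- measurability helpers
  have hfh_cont : ContinuousOn (fun y => f (h * y)) (Ioi (0:ℝ)) := by
    apply hf_cont.comp ((continuous_const.mul continuous_id).continuousOn)
    intro y hy
    exact le_of_lt (mul_pos hh hy)
  have hf_cont' : ContinuousOn f (Ioi (0:ℝ)) := hf_cont.mono Ioi_subset_Ici_self
  have hrpow_cont : ∀ c : ℝ, ContinuousOn (fun y : ℝ => y ^ c) (Ioi (0:ℝ)) := by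
    intro c
    exact continuousOn_id.rpow_const (fun x hx => Or.inl (ne_of_gt hx))
  -- Integrability facts
  have I1 : IntegrableOn (fun y => f (h * y) * p y) (Ioi (0:ℝ)) := by
    apply Integrable.mono' (hp_int.const_mul M)
      ((hfh_cont.aestronglyMeasurable measurableSet_Ioi).mul hp_meas.aestronglyMeasurable)
    filter_upwards [ae_restrict_mem measurableSet_Ioi] with y hy
    first | simp only [Pi.mul_apply] | skip
    rw [Real.norm_eq_abs, abs_mul, abs_of_nonneg (hp_nonneg y hy)]
    exact mul_le_mul_of_nonneg_right (hM _ (le_of_lt (mul_pos hh hy))) (hp_nonneg y hy)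
  have Irpow : ∀ c : ℝ, 0 < c → IntegrableOn (fun y : ℝ => y ^ (-1 - α)) (Ioi c) := by
    intro c hc
    exact integrableOn_Ioi_rpow_of_lt (by linarith) hc
  have I3 : IntegrableOn (fun y => f (h * y) * y ^ (-1 - α)) (Ioi B) := by
    apply Integrable.mono' (((Irpow B hB).const_mul M))
      (((hfh_cont.mono (Ioi_subset_Ioi hB.le)).mul
        ((hrpow_cont _).mono (Ioi_subset_Ioi hB.le))).aestronglyMeasurable measurableSet_Ioi)
    filter_upwards [ae_restrict_mem measurableSet_Ioi] with y hy
    have hy0 : (0:ℝ) < y := lt_trans hB hy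
    simp only [Pi.mul_apply]
    rw [Real.norm_eq_abs, abs_mul, abs_of_nonneg (Real.rpow_nonneg hy0.le _)]
    exact mul_le_mul_of_nonneg_right (hM _ (le_of_lt (mul_pos hh hy0)))
      (Real.rpow_nonneg hy0.le _)
  have I4 : IntegrableOn (fun y => f y * y ^ (-1 - α)) (Ioi (B * h)) := by
    apply Integrable.mono' (((Irpow _ hBh).const_mul M))
      (((hf_cont'.mono (Ioi_subset_Ioi hBh.le)).mul
        ((hrpow_cont _).mono (Ioi_subset_Ioi hBh.le))).aestronglyMeasurable measurableSet_Ioi)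
    filter_upwards [ae_restrict_mem measurableSet_Ioi] with y hy
    have hy0 : (0:ℝ) < y := lt_trans hBh hy
    simp only [Pi.mul_apply]
    rw [Real.norm_eq_abs, abs_mul, abs_of_nonneg (Real.rpow_nonneg hy0.le _)]
    exact mul_le_mul_of_nonneg_right (hM _ hy0.le) (Real.rpow_nonneg hy0.le _)
  have I5 : IntegrableOn (fun y : ℝ => y ^ (β - 1 - α)) (Ioc 0 (B * h)) := by
    have := intervalIntegral.intervalIntegrable_rpow' (a := 0) (b := B * h)
      (r := β - 1 - α) (by linarith)
    rwa [intervalIntegrable_iff_integrableOn_Ioc_of_le hBh.le] at this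
  have I6 : IntegrableOn (fun y => f y * y ^ (-1 - α)) (Ioc 0 (B * h)) := by
    apply Integrable.mono' (I5.const_mul L)
      (((hf_cont'.mono Ioc_subset_Ioi_self).mul
        ((hrpow_cont _).mono Ioc_subset_Ioi_self)).aestronglyMeasurable measurableSet_Ioc)
    filter_upwards [ae_restrict_mem measurableSet_Ioc] with y hy
    first | simp only [Pi.mul_apply] | skip
    have hy0 : (0:ℝ) < y := hy.1
    rw [Real.norm_eq_abs, abs_mul, abs_of_nonneg (Real.rpow_nonneg hy0.le _)]
    calc |f y| * y ^ (-1 - α) ≤ (L * y ^ β) * y ^ (-1 - α) :=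
          mul_le_mul_of_nonneg_right (hf_hold y ⟨hy0.le, hy.2⟩) (Real.rpow_nonneg hy0.le _)
      _ = L * y ^ (β - 1 - α) := by
          rw [mul_assoc, ← Real.rpow_add hy0]; ring_nf
  have I7 : IntegrableOn (fun y => f y * y ^ (-1 - α)) (Ioi (0:ℝ)) := by
    rw [← Ioc_union_Ioi_eq_Ioi hBh.le]
    exact I6.union I4
  have I8 : IntegrableOn (fun y : ℝ => y ^ β * p y) (Ioc (0:ℝ) B) := by
    apply Integrable.mono' ((hp_int.mono_set Ioc_subset_Ioi_self).const_mul (B ^ β))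
      (((hrpow_cont _).mono Ioc_subset_Ioi_self).aestronglyMeasurable measurableSet_Ioc
        |>.mul hp_meas.aestronglyMeasurable)
    filter_upwards [ae_restrict_mem measurableSet_Ioc] with y hy
    first | simp only [Pi.mul_apply] | skip
    have hy0 : (0:ℝ) < y := hy.1
    rw [Real.norm_eq_abs, abs_mul, abs_of_nonneg (Real.rpow_nonneg hy0.le _),
      abs_of_nonneg (hp_nonneg y hy0)]
    exact mul_le_mul_of_nonneg_right
      (Real.rpow_le_rpow hy0.le hy.2 (by linarith)) (hp_nonneg y hy0)
  have I9 : IntegrableOn (fun y => f (h * y) * p y) (Ioc (0:ℝ) B) :=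
    I1.mono_set Ioc_subset_Ioi_self
  -- Step A: split the first integral at B
  have splitA : (∫ y in Ioi (0:ℝ), f (h * y) * p y)
      = (∫ y in Ioc (0:ℝ) B, f (h * y) * p y) + ∫ y in Ioi B, f (h * y) * y ^ (-1 - α) := by
    rw [← Ioc_union_Ioi_eq_Ioi hB.le,
      setIntegral_union (Ioc_disjoint_Ioi le_rfl) measurableSet_Ioi I9
        (I1.mono_set (Ioi_subset_Ioi hB.le))]
    congr 1
    exact setIntegral_congr_fun measurableSet_Ioi fun y hy => by
      rw [hp_tail y (le_of_lt hy)]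
  -- Step B: change of variables on the tail
  have cov : (∫ y in Ioi B, f (h * y) * y ^ (-1 - α))
      = h ^ α * ∫ z in Ioi (B * h), f z * z ^ (-1 - α) := by
    have key := integral_comp_mul_left_Ioi (fun z => f z * z ^ (-1 - α)) B hh
    have lhs_eq : (∫ x in Ioi B, f (h * x) * (h * x) ^ (-1 - α))
        = h ^ (-1 - α) * ∫ x in Ioi B, f (h * x) * x ^ (-1 - α) := by
      rw [← integral_const_mul]
      apply setIntegral_congr_fun measurableSet_Ioi
      intro x hx
      have hx0 : (0:ℝ) < x := lt_trans hB hx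
      show f (h * x) * (h * x) ^ (-1 - α) = h ^ (-1 - α) * (f (h * x) * x ^ (-1 - α))
      rw [Real.mul_rpow hh.le hx0.le]; ring
    rw [lhs_eq, smul_eq_mul, mul_comm h B] at key
    have h1 : h ^ α * h ^ (1:ℝ) * h ^ (-1 - α) = 1 := by
      rw [← Real.rpow_add hh, ← Real.rpow_add hh,
        show α + 1 + (-1 - α) = 0 by ring, Real.rpow_zero]
    calc (∫ x in Ioi B, f (h * x) * x ^ (-1 - α))
        = (h ^ α * h ^ (1:ℝ) * h ^ (-1 - α)) * ∫ x in Ioi B, f (h * x) * x ^ (-1 - α) := by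
          rw [h1, one_mul]
      _ = h ^ α * (h ^ (1:ℝ) * (h ^ (-1 - α) * ∫ x in Ioi B, f (h * x) * x ^ (-1 - α))) := by
          ring
      _ = h ^ α * (h ^ (1:ℝ) * (h⁻¹ * ∫ z in Ioi (B * h), f z * z ^ (-1 - α))) := by
          rw [key]
      _ = h ^ α * ∫ z in Ioi (B * h), f z * z ^ (-1 - α) := by
          rw [Real.rpow_one, mul_inv_cancel_left₀ hh.ne']
  -- Step C: split the second integral at B*h
  have splitC : (∫ y in Ioi (0:ℝ), f y * y ^ (-1 - α))
      = (∫ y in Ioc (0:ℝ) (B * h), f y * y ^ (-1 - α))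
        + ∫ y in Ioi (B * h), f y * y ^ (-1 - α) := by
    rw [← Ioc_union_Ioi_eq_Ioi hBh.le,
      setIntegral_union (Ioc_disjoint_Ioi le_rfl) measurableSet_Ioi I6 I4]
  -- Combine
  set T1 : ℝ := ∫ y in Ioc (0:ℝ) B, f (h * y) * p y with hT1
  set T2 : ℝ := ∫ y in Ioc (0:ℝ) (B * h), f y * y ^ (-1 - α) with hT2
  have hcomb : h ^ (-α) * (∫ y in Ioi (0:ℝ), f (h * y) * p y)
      - (∫ y in Ioi (0:ℝ), f y * y ^ (-1 - α)) = h ^ (-α) * T1 - T2 := by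
    rw [splitA, cov, splitC]
    have : h ^ (-α) * h ^ α = 1 := by
      rw [← Real.rpow_add hh]; norm_num
    linear_combination (∫ y in Ioi (B * h), f y * y ^ (-1 - α)) * this
  rw [hcomb]
  -- Bound term 1
  have hb1 : |T1| ≤ L * h ^ β * ∫ y in Ioc (0:ℝ) B, y ^ β * p y := by
    calc |T1| ≤ ∫ y in Ioc (0:ℝ) B, |f (h * y) * p y| := by
          simpa only [Real.norm_eq_abs] using norm_integral_le_integral_norm
            (μ := volume.restrict (Ioc (0:ℝ) B)) (fun y => f (h * y) * p y)
      _ ≤ ∫ y in Ioc (0:ℝ) B, L * h ^ β * (y ^ β * p y) := by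
          apply setIntegral_mono_on I9.abs ((I8.const_mul _)) measurableSet_Ioc
          intro y hy
          have hy0 : (0:ℝ) < y := hy.1
          rw [abs_mul, abs_of_nonneg (hp_nonneg y hy0)]
          have hfb : |f (h * y)| ≤ L * (h * y) ^ β := by
            apply hf_hold
            constructor
            · positivity
            · rw [mul_comm B h]; exact mul_le_mul_of_nonneg_left hy.2 hh.le
          calc |f (h * y)| * p y ≤ (L * (h * y) ^ β) * p y :=
                mul_le_mul_of_nonneg_right hfb (hp_nonneg y hy0)
            _ = L * h ^ β * (y ^ β * p y) := by
                rw [Real.mul_rpow hh.le hy0.le]; ring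
      _ = L * h ^ β * ∫ y in Ioc (0:ℝ) B, y ^ β * p y := integral_const_mul _ _
  -- Bound term 2
  have hrint : (∫ y in Ioc (0:ℝ) (B * h), y ^ (β - 1 - α)) = (B * h) ^ (β - α) / (β - α) := by
    rw [← intervalIntegral.integral_of_le hBh.le,
      integral_rpow (Or.inl (by linarith))]
    rw [show β - 1 - α + 1 = β - α by ring, Real.zero_rpow (by linarith : β - α ≠ 0)]
    ring
  have hb2 : |T2| ≤ L * (B * h) ^ (β - α) / (β - α) := by
    calc |T2| ≤ ∫ y in Ioc (0:ℝ) (B * h), |f y * y ^ (-1 - α)| := by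
          simpa only [Real.norm_eq_abs] using norm_integral_le_integral_norm
            (μ := volume.restrict (Ioc (0:ℝ) (B * h))) (fun y => f y * y ^ (-1 - α))
      _ ≤ ∫ y in Ioc (0:ℝ) (B * h), L * y ^ (β - 1 - α) := by
          apply setIntegral_mono_on I6.abs (I5.const_mul _) measurableSet_Ioc
          intro y hy
          have hy0 : (0:ℝ) < y := hy.1
          rw [abs_mul, abs_of_nonneg (Real.rpow_nonneg hy0.le _)]
          calc |f y| * y ^ (-1 - α) ≤ (L * y ^ β) * y ^ (-1 - α) :=
                mul_le_mul_of_nonneg_right (hf_hold y ⟨hy0.le, hy.2⟩)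
                  (Real.rpow_nonneg hy0.le _)
            _ = L * y ^ (β - 1 - α) := by
                rw [mul_assoc, ← Real.rpow_add hy0]; ring_nf
      _ = L * ((B * h) ^ (β - α) / (β - α)) := by rw [integral_const_mul, hrint]
      _ = L * (B * h) ^ (β - α) / (β - α) := by ring
  -- finish
  have hha : 0 < h ^ (-α) := Real.rpow_pos_of_pos hh _
  have habs : |h ^ (-α) * T1 - T2| ≤ h ^ (-α) * |T1| + |T2| := by
    calc |h ^ (-α) * T1 - T2| ≤ |h ^ (-α) * T1| + |T2| := abs_sub _ _
      _ = h ^ (-α) * |T1| + |T2| := by rw [abs_mul, abs_of_pos hha]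
  have hpow1 : h ^ (-α) * (L * h ^ β) = L * h ^ (β - α) := by
    rw [show β - α = -α + β by ring, Real.rpow_add hh]; ring
  have hpow2 : (B * h) ^ (β - α) = B ^ (β - α) * h ^ (β - α) :=
    Real.mul_rpow hB.le hh.le
  calc |h ^ (-α) * T1 - T2| ≤ h ^ (-α) * |T1| + |T2| := habs
    _ ≤ h ^ (-α) * (L * h ^ β * ∫ y in Ioc (0:ℝ) B, y ^ β * p y)
        + L * (B * h) ^ (β - α) / (β - α) := by
        apply add_le_add _ hb2
        exact mul_le_mul_of_nonneg_left hb1 hha.le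
    _ = (B ^ (β - α) / (β - α) + ∫ y in Ioc (0:ℝ) B, y ^ β * p y) * L * h ^ (β - α) := by
        rw [hpow2, ← mul_assoc (h ^ (-α)), hpow1]
        ring
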